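/- For every u ∈ D_w(A₂) one has ⟨A₂u, u⟩_{Y_μ} = ∫₀¹ (u'')² dx − (γ₀/β₀) u(0)² − (γ₁/β₁) u(1)² ≥ 0; i.e. the operator A₂ : D_w(A₂) → Y_μ is non negative. -/

import Mathlib

open MeasureTheory Set Filter

/-- `f` is absolutely continuous on `[c,d]` with (a.e.) derivative `g`,
expressed via the fundamental theorem of calculus. -/
def ACOn (c d : ℝ) (f g : ℝ → ℝ) : Prop :=
  MeasureTheory.IntegrableOn g (Set.Icc c d) ∧
    ∀ x ∈ Set.Icc c d, f x = f c + ∫ t in c..x, g t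

/-- `f` is locally absolutely continuous on `[0,1] \ {x₀}` with derivative `g`. -/
def LocACOn (x₀ : ℝ) (f g : ℝ → ℝ) : Prop :=
  ∀ c d : ℝ, 0 ≤ c → d ≤ 1 → c ≤ d → x₀ ∉ Set.Icc c d → ACOn c d f g

/-- `a` is weakly degenerate with degeneracy point `x₀`. -/
def WeaklyDeg (a : ℝ → ℝ) (x₀ : ℝ) : Prop :=
  ContinuousOn a (Set.Icc 0 1) ∧ x₀ ∈ Set.Icc (0:ℝ) 1 ∧ a x₀ = 0 ∧
    (∀ x ∈ Set.Icc (0:ℝ) 1, x ≠ x₀ → 0 < a x) ∧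
    MeasureTheory.IntegrableOn (fun x => 1 / a x) (Set.Ioo 0 1)

/-- `a` is strongly degenerate with degeneracy point `x₀`. -/
def StronglyDeg (a : ℝ → ℝ) (x₀ : ℝ) : Prop :=
  ContinuousOn a (Set.Icc 0 1) ∧ x₀ ∈ Set.Icc (0:ℝ) 1 ∧ a x₀ = 0 ∧
    (∀ x ∈ Set.Icc (0:ℝ) 1, x ≠ x₀ → 0 < a x) ∧
    ¬ MeasureTheory.IntegrableOn (fun x => 1 / a x) (Set.Ioo 0 1)

/-- Hypothesis (H): there is `K ∈ [1,2)` such that `x ↦ |x-x₀|^K / a x` is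
non-increasing on `[0,x₀)` and non-decreasing on `(x₀,1]`. -/
def HypH (a : ℝ → ℝ) (x₀ : ℝ) : Prop :=
  ∃ K : ℝ, 1 ≤ K ∧ K < 2 ∧
    AntitoneOn (fun x => |x - x₀| ^ K / a x) (Set.Ico 0 x₀) ∧
    MonotoneOn (fun x => |x - x₀| ^ K / a x) (Set.Ioc x₀ 1)

/-- The squared `L²(0,1)` norm. -/
noncomputable def sqL2 (f : ℝ → ℝ) : ℝ := ∫ x in Set.Ioo (0:ℝ) 1, (f x) ^ 2

/-- Membership of `u` (with derivatives `u₁ = u'`, `u₂ = u''`, `u₃ = u'''`, `u₄ = u''''`)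
in the domain `D_w(A₂)` (weakly degenerate case): `u ∈ H²(0,1)`, the fourth derivative
`u''''` exists (so `u ∈ W^{4,1}(0,1) ⊂ C³([0,1])`) with `∫ a (u'''')² < ∞`, and
`u''(0) = u''(1) = 0`. -/
def MemD2w (a : ℝ → ℝ) (u u₁ u₂ u₃ u₄ : ℝ → ℝ) : Prop :=
  ACOn 0 1 u u₁ ∧ ACOn 0 1 u₁ u₂ ∧ ACOn 0 1 u₂ u₃ ∧ ACOn 0 1 u₃ u₄ ∧
  MeasureTheory.IntegrableOn (fun x => (u₁ x) ^ 2) (Set.Ioo 0 1) ∧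
  MeasureTheory.IntegrableOn (fun x => (u₂ x) ^ 2) (Set.Ioo 0 1) ∧
  MeasureTheory.IntegrableOn (fun x => a x * (u₄ x) ^ 2) (Set.Ioo 0 1) ∧
  u₂ 0 = 0 ∧ u₂ 1 = 0

/-- The inner product of `Y_μ = L²((0,1), dx/a) ⊕ ℝ_{1/β₀} ⊕ ℝ_{1/β₁}`. -/
noncomputable def innerY (a : ℝ → ℝ) (β₀ β₁ : ℝ) (f g : ℝ → ℝ) : ℝ :=
  (∫ x in Set.Ioo (0:ℝ) 1, f x * g x / a x) + (f 0 * g 0) / β₀ + (f 1 * g 1) / β₁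

/-- The element `A₂u` of `Y_μ`: it equals `a u''''` on `(0,1)` and its boundary values
are dictated by the generalized Wentzell boundary conditions:
`(A₂u)(j) = (-1)^j β_j u'''(j) - γ_j u(j)`. -/
noncomputable def A2fun (a : ℝ → ℝ) (β₀ β₁ γ₀ γ₁ : ℝ) (u u₃ u₄ : ℝ → ℝ) : ℝ → ℝ :=
  fun x =>
    if x = 0 then β₀ * u₃ 0 - γ₀ * u 0
    else if x = 1 then -β₁ * u₃ 1 - γ₁ * u 1
    else a x * u₄ x

/-! ### Auxiliary lemmas -/

private lemma ACOn.contOn {f f' : ℝ → ℝ} (h : ACOn 0 1 f f') :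
    ContinuousOn f (Set.Icc 0 1) := by
  have h1 : ContinuousOn (fun x => f 0 + ∫ t in (0:ℝ)..x, f' t) (Set.Icc 0 1) := by
    apply continuousOn_const.add
    have h2 : IntegrableOn f' (Set.uIcc (0:ℝ) 1) := by
      rw [Set.uIcc_of_le zero_le_one]; exact h.1
    simpa [Set.uIcc_of_le (zero_le_one (α := ℝ))] using
      intervalIntegral.continuousOn_primitive_interval (a := (0:ℝ)) (b := 1) h2
  exact h1.congr fun x hx => h.2 x hx

private lemma ACOn.bound {f f' : ℝ → ℝ} (h : ACOn 0 1 f f') :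
    ∃ C, ∀ x ∈ Set.Icc (0:ℝ) 1, ‖f x‖ ≤ C :=
  isCompact_Icc.exists_bound_of_continuousOn h.contOn

private lemma ACOn.int' {f f' : ℝ → ℝ} (h : ACOn 0 1 f f') :
    IntegrableOn f' (Set.Ioo 0 1) :=
  h.1.mono_set Set.Ioo_subset_Icc_self

/-- product of the derivative of one AC function with another AC function is integrable -/
private lemma mul_int {f f' g g' : ℝ → ℝ} (hf : ACOn 0 1 f f') (hg : ACOn 0 1 g g') :
    IntegrableOn (fun x => f' x * g x) (Set.Ioo 0 1) := by
  obtain ⟨C, hC⟩ := hg.bound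
  have hm : AEStronglyMeasurable (fun x => f' x * g x) (volume.restrict (Set.Ioo 0 1)) := by
    have h1 : AEStronglyMeasurable f' (volume.restrict (Set.Ioo 0 1)) :=
      hf.int'.aestronglyMeasurable
    have h2 : AEStronglyMeasurable g (volume.restrict (Set.Ioo 0 1)) :=
      (hg.contOn.mono Set.Ioo_subset_Icc_self).aestronglyMeasurable measurableSet_Ioo
    exact h1.mul h2
  refine Integrable.mono' (hf.int'.norm.mul_const C) hm ?_
  filter_upwards [ae_restrict_mem measurableSet_Ioo] with x hx
  have : ‖g x‖ ≤ C := hC x (Set.Ioo_subset_Icc_self hx)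
  calc ‖f' x * g x‖ = ‖f' x‖ * ‖g x‖ := norm_mul _ _
    _ ≤ ‖f' x‖ * C := by
        exact mul_le_mul_of_nonneg_left this (norm_nonneg _)

private lemma ACOn.rep {f f' : ℝ → ℝ} (h : ACOn 0 1 f f') {x : ℝ}
    (hx : x ∈ Set.Icc (0:ℝ) 1) :
    f x = f 0 + ∫ t in Set.Ioo 0 x, f' t := by
  rw [h.2 x hx, intervalIntegral.integral_of_le hx.1,
    MeasureTheory.integral_Ioc_eq_integral_Ioo]

private lemma ACOn.intervalInt {f f' : ℝ → ℝ} (h : ACOn 0 1 f f') {s t : ℝ}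
    (h0 : 0 ≤ s) (hst : s ≤ t) (h1 : t ≤ 1) : IntervalIntegrable f' volume s t := by
  rw [intervalIntegrable_iff_integrableOn_Ioc_of_le hst]
  refine h.1.mono_set fun x hx => ?_
  exact ⟨le_trans h0 hx.1.le, le_trans hx.2 h1⟩

private lemma ACOn.rep_right {f f' : ℝ → ℝ} (h : ACOn 0 1 f f') {t : ℝ}
    (ht : t ∈ Set.Icc (0:ℝ) 1) :
    f 1 - f t = ∫ x in Set.Ioo t 1, f' x := by
  have h1 := h.2 1 (by norm_num)
  have h2 := h.2 t ht
  have hadd : (∫ x in (0:ℝ)..t, f' x) + ∫ x in t..1, f' x = ∫ x in (0:ℝ)..1, f' x :=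
    intervalIntegral.integral_add_adjacent_intervals
      (h.intervalInt le_rfl ht.1 ht.2) (h.intervalInt ht.1 ht.2 le_rfl)
  have h3 : (∫ x in t..1, f' x) = ∫ x in Set.Ioo t 1, f' x := by
    rw [intervalIntegral.integral_of_le ht.2, MeasureTheory.integral_Ioc_eq_integral_Ioo]
  rw [h1, h2, ← hadd, h3]
  ring

/-- Integration by parts for absolutely continuous functions on `[0,1]`. -/
private lemma ibp {f f' g g' : ℝ → ℝ} (hf : ACOn 0 1 f f') (hg : ACOn 0 1 g g') :
    ∫ x in Set.Ioo (0:ℝ) 1, f' x * g x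
      = f 1 * g 1 - f 0 * g 0 - ∫ x in Set.Ioo (0:ℝ) 1, f x * g' x := by
  set I : Set ℝ := Set.Ioo 0 1 with hI
  set F : ℝ × ℝ → ℝ := Set.indicator {p : ℝ × ℝ | p.2 < p.1} (fun p => f' p.1 * g' p.2)
    with hF
  have hFval : ∀ x t : ℝ, F (x, t) = if t < x then f' x * g' t else 0 := by
    intro x t; simp [hF, Set.indicator_apply]
  -- integrability of F on the product
  have hμ : ∀ {φ : ℝ → ℝ}, IntegrableOn φ I → Integrable φ (volume.restrict I) := fun h => h
  have hFint : Integrable F ((volume.restrict I).prod (volume.restrict I)) := by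
    have hbase : Integrable (fun p : ℝ × ℝ => f' p.1 * g' p.2)
        ((volume.restrict I).prod (volume.restrict I)) :=
      Integrable.mul_prod hf.int' hg.int'
    refine Integrable.mono' hbase.norm
      (hbase.aestronglyMeasurable.indicator
        (measurableSet_lt measurable_snd measurable_fst)) ?_
    filter_upwards with p
    rw [hF]
    exact norm_indicator_le_norm_self _ _
  -- inner rewrite : f' x * g x
  have key : ∀ x ∈ I, f' x * g x = f' x * g 0 + ∫ t in I, F (x, t) := by
    intro x hx
    have hxIcc : x ∈ Set.Icc (0:ℝ) 1 := Set.Ioo_subset_Icc_self hx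
    have hset : Set.Iio x ∩ I = Set.Ioo 0 x := by
      ext t
      simp only [Set.mem_inter_iff, Set.mem_Iio, hI, Set.mem_Ioo]
      constructor
      · rintro ⟨h1, h2, h3⟩; exact ⟨h2, h1⟩
      · rintro ⟨h1, h2⟩; exact ⟨h2, h1, h2.trans hx.2⟩
    have hgx : g x = g 0 + ∫ t in I, Set.indicator (Set.Iio x) g' t := by
      rw [hg.rep hxIcc, MeasureTheory.integral_indicator measurableSet_Iio,
        MeasureTheory.Measure.restrict_restrict measurableSet_Iio, hset]
    have hinner : ∫ t in I, F (x, t) = f' x * ∫ t in I, Set.indicator (Set.Iio x) g' t := by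
      rw [← MeasureTheory.integral_const_mul]
      refine MeasureTheory.integral_congr_ae (Eventually.of_forall fun t => ?_)
      show F (x, t) = f' x * (Set.Iio x).indicator g' t
      rw [hFval]
      by_cases h : t < x <;> simp [Set.indicator_apply, Set.mem_Iio, h]
    rw [hgx, hinner]; ring
  rw [MeasureTheory.setIntegral_congr_fun measurableSet_Ioo key]
  -- split the integral
  have hint1 : Integrable (fun x => f' x * g 0) (volume.restrict I) :=
    hμ (hf.int'.mul_const _)
  have hint2 : Integrable (fun x => ∫ t in I, F (x, t)) (volume.restrict I) :=
    hFint.integral_prod_left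
  rw [MeasureTheory.integral_add hint1 hint2]
  -- Fubini
  have hswap : ∫ x in I, ∫ t in I, F (x, t) = ∫ t in I, ∫ x in I, F (x, t) :=
    MeasureTheory.integral_integral_swap (f := fun x t => F (x, t)) hFint
  -- inner integral in x
  have key2 : ∀ t ∈ I, (∫ x in I, F (x, t)) = g' t * (f 1 - f t) := by
    intro t ht
    have htIcc : t ∈ Set.Icc (0:ℝ) 1 := Set.Ioo_subset_Icc_self ht
    have hset : Set.Ioi t ∩ I = Set.Ioo t 1 := by
      ext x
      simp only [Set.mem_inter_iff, Set.mem_Ioi, hI, Set.mem_Ioo]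
      constructor
      · rintro ⟨h1, h2, h3⟩; exact ⟨h1, h3⟩
      · rintro ⟨h1, h2⟩; exact ⟨h1, ht.1.trans h1, h2⟩
    have h1 : ∀ x : ℝ, F (x, t) = Set.indicator (Set.Ioi t) f' x * g' t := by
      intro x
      show F (x, t) = (Set.Ioi t).indicator f' x * g' t
      rw [hFval]
      by_cases h : t < x <;> simp [Set.indicator_apply, Set.mem_Ioi, h]
    calc (∫ x in I, F (x, t)) = ∫ x in I, Set.indicator (Set.Ioi t) f' x * g' t :=
          MeasureTheory.integral_congr_ae (Eventually.of_forall fun x => h1 x)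
      _ = (∫ x in I, Set.indicator (Set.Ioi t) f' x) * g' t :=
          MeasureTheory.integral_mul_const _ _
      _ = (∫ x in Set.Ioo t 1, f' x) * g' t := by
          rw [MeasureTheory.integral_indicator measurableSet_Ioi,
            MeasureTheory.Measure.restrict_restrict measurableSet_Ioi, hset]
      _ = g' t * (f 1 - f t) := by rw [← hf.rep_right htIcc]; ring
  rw [hswap, MeasureTheory.setIntegral_congr_fun measurableSet_Ioo key2]
  -- remaining one-dimensional integrals
  have hf' : (∫ x in I, f' x) = f 1 - f 0 := by
    have := hf.rep (f' := f') (x := 1) (by norm_num); rw [this]; ring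
  have hg' : (∫ x in I, g' x) = g 1 - g 0 := by
    have := hg.rep (f' := g') (x := 1) (by norm_num); rw [this]; ring
  have hsplit : ∀ t : ℝ, g' t * (f 1 - f t) = g' t * f 1 - g' t * f t := fun t => by ring
  have hint3 : Integrable (fun t => g' t * f 1) (volume.restrict I) :=
    hμ (hg.int'.mul_const _)
  have hint4 : Integrable (fun t => g' t * f t) (volume.restrict I) :=
    hμ (mul_int hg hf)
  calc (∫ x in I, f' x * g 0) + ∫ t in I, g' t * (f 1 - f t)
      = (∫ x in I, f' x) * g 0 + ((∫ t in I, g' t * f 1) - ∫ t in I, g' t * f t) := by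
        rw [MeasureTheory.integral_mul_const]
        congr 1
        rw [← MeasureTheory.integral_sub hint3 hint4]
        exact MeasureTheory.integral_congr_ae (Eventually.of_forall fun t => hsplit t)
    _ = (f 1 - f 0) * g 0 + ((g 1 - g 0) * f 1 - ∫ t in I, g' t * f t) := by
        rw [hf', MeasureTheory.integral_mul_const, hg']
    _ = f 1 * g 1 - f 0 * g 0 - ∫ x in I, f x * g' x := by
        have : (∫ t in I, g' t * f t) = ∫ x in I, f x * g' x :=
          MeasureTheory.integral_congr_ae (Eventually.of_forall fun t => mul_comm _ _)
        rw [this]; ring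

/-- the operator `A₂` with generalized Wentzell boundary conditions is
non negative on `Y_μ`:
`⟨A₂u, u⟩ = ∫ (u'')² - (γ₀/β₀) u(0)² - (γ₁/β₁) u(1)² ≥ 0`. -/
theorem statement17 (β₀ β₁ γ₀ γ₁ : ℝ) (hβ₀ : 0 < β₀) (hβ₁ : 0 < β₁)
    (hγ₀ : γ₀ ≤ 0) (hγ₁ : γ₁ ≤ 0)
    (a : ℝ → ℝ) (x₀ : ℝ) (hx₀ : x₀ ∈ Set.Ioo (0:ℝ) 1) (ha : WeaklyDeg a x₀)
    (u u₁ u₂ u₃ u₄ : ℝ → ℝ) (hu : MemD2w a u u₁ u₂ u₃ u₄) :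
    innerY a β₀ β₁ (A2fun a β₀ β₁ γ₀ γ₁ u u₃ u₄) u =
      (∫ x in Set.Ioo (0:ℝ) 1, (u₂ x) ^ 2)
        - (γ₀ / β₀) * (u 0) ^ 2 - (γ₁ / β₁) * (u 1) ^ 2 ∧
    0 ≤ innerY a β₀ β₁ (A2fun a β₀ β₁ γ₀ γ₁ u u₃ u₄) u := by
  obtain ⟨hu01, hu12, hu23, hu34, hi1, hi2, hi4, hb0, hb1⟩ := hu
  -- the integral term equals ∫ u₄ u
  have hne : ∀ᵐ x : ℝ, x ≠ x₀ := by
    rw [MeasureTheory.ae_iff]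
    simpa using MeasureTheory.measure_singleton (μ := (volume : Measure ℝ)) x₀
  have hIeq : (∫ x in Set.Ioo (0:ℝ) 1, A2fun a β₀ β₁ γ₀ γ₁ u u₃ u₄ x * u x / a x)
      = ∫ x in Set.Ioo (0:ℝ) 1, u₄ x * u x := by
    refine MeasureTheory.setIntegral_congr_ae measurableSet_Ioo ?_
    filter_upwards [hne] with x hxne hx
    have h0 : x ≠ 0 := ne_of_gt hx.1
    have h1 : x ≠ 1 := ne_of_lt hx.2
    have hapos : 0 < a x := ha.2.2.2.1 x (Set.Ioo_subset_Icc_self hx) hxne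
    simp only [A2fun, if_neg h0, if_neg h1]
    field_simp
  -- integration by parts, twice
  have h1 : (∫ x in Set.Ioo (0:ℝ) 1, u₄ x * u x)
      = u₃ 1 * u 1 - u₃ 0 * u 0 - ∫ x in Set.Ioo (0:ℝ) 1, u₃ x * u₁ x := ibp hu34 hu01
  have h2 : (∫ x in Set.Ioo (0:ℝ) 1, u₃ x * u₁ x)
      = u₂ 1 * u₁ 1 - u₂ 0 * u₁ 0 - ∫ x in Set.Ioo (0:ℝ) 1, u₂ x * u₂ x := ibp hu23 hu12
  have h3 : (∫ x in Set.Ioo (0:ℝ) 1, u₂ x * u₂ x) = ∫ x in Set.Ioo (0:ℝ) 1, (u₂ x) ^ 2 :=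
    MeasureTheory.integral_congr_ae (Eventually.of_forall fun x => (sq (u₂ x)).symm)
  have hmain : innerY a β₀ β₁ (A2fun a β₀ β₁ γ₀ γ₁ u u₃ u₄) u =
      (∫ x in Set.Ioo (0:ℝ) 1, (u₂ x) ^ 2)
        - (γ₀ / β₀) * (u 0) ^ 2 - (γ₁ / β₁) * (u 1) ^ 2 := by
    unfold innerY
    rw [hIeq, h1, h2, h3, hb0, hb1]
    simp only [A2fun, if_pos rfl, if_neg (one_ne_zero (α := ℝ)), if_pos rfl, if_true]
    field_simp
    ring
  refine ⟨hmain, ?_⟩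
  rw [hmain]
  have hint : 0 ≤ ∫ x in Set.Ioo (0:ℝ) 1, (u₂ x) ^ 2 :=
    MeasureTheory.setIntegral_nonneg measurableSet_Ioo fun x _ => sq_nonneg _
  have h4 : γ₀ / β₀ * u 0 ^ 2 ≤ 0 :=
    mul_nonpos_of_nonpos_of_nonneg (div_nonpos_of_nonpos_of_nonneg hγ₀ hβ₀.le) (sq_nonneg _)
  have h5 : γ₁ / β₁ * u 1 ^ 2 ≤ 0 :=
    mul_nonpos_of_nonpos_of_nonneg (div_nonpos_of_nonpos_of_nonneg hγ₁ hβ₁.le) (sq_nonneg _)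
  linarith
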